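/- Let Q be an acyclic quiver with a Dynkin subquiver partition Q• = {Q¹,…,Q^ℓ}. Suppose there exists an enumeration φ₁,…,φ_r of Φ(Q,Q•) satisfying: for all u < v, if φ_u and φ_v lie in the same Φ^j then λ_{Q^j₁}(φ_u,φ_v) ≥ 0 and λ_{Q₁∖Q^j₁}(φ_u,φ_v) ≤ 0, and if φ_u and φ_v lie in different Φ^j's then λ(φ_u,φ_v) ≤ 0. Then Q• is admissible, i.e. the contracted quiver P(Q,Q•) is acyclic (in particular it has no loops, 2-cycles, or longer directed cycles). -/

import Mathlib

open scoped BigOperators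

/-- A quiver on vertex set `Fin n` with `m` arrows, each arrow `a` having a
tail `ta a` and a head `ha a`. -/
structure Quiv (n : ℕ) where
  m : ℕ
  ta : Fin m → Fin n
  ha : Fin m → Fin n

namespace Quiv

variable {n : ℕ}

/-- Coerce a dimension vector in `ℕⁿ` to `ℤⁿ`. -/
def toZ {n : ℕ} (γ : Fin n → ℕ) : Fin n → ℤ := fun i => (γ i : ℤ)

/-- The Euler form of the subquiver with vertex set `V` and arrow set `A`. -/
def chiSub (Q : Quiv n) (V : Finset (Fin n)) (A : Finset (Fin Q.m))
    (γ₁ γ₂ : Fin n → ℤ) : ℤ :=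
  (∑ i ∈ V, γ₁ i * γ₂ i) - ∑ a ∈ A, γ₁ (Q.ta a) * γ₂ (Q.ha a)

/-- The Euler form `χ` of `Q`. -/
def chi (Q : Quiv n) (γ₁ γ₂ : Fin n → ℤ) : ℤ :=
  Q.chiSub Finset.univ Finset.univ γ₁ γ₂

/-- `λ(γ₁,γ₂) = χ(γ₂,γ₁) − χ(γ₁,γ₂)`, the antisymmetrized Euler form. -/
def lam (Q : Quiv n) (γ₁ γ₂ : Fin n → ℤ) : ℤ := Q.chi γ₂ γ₁ - Q.chi γ₁ γ₂

/-- `λ_A`, the restriction of `λ` to a subset `A` of the arrows. -/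
def lamA (Q : Quiv n) (A : Finset (Fin Q.m)) (γ₁ γ₂ : Fin n → ℤ) : ℤ :=
  ∑ a ∈ A, (γ₁ (Q.ta a) * γ₂ (Q.ha a) - γ₂ (Q.ta a) * γ₁ (Q.ha a))

/-- No directed cycle using only arrows from `A`. -/
def AcyclicOn (Q : Quiv n) (A : Finset (Fin Q.m)) : Prop :=
  ¬ ∃ (k : ℕ) (c : ZMod (k + 1) → Fin Q.m),
      (∀ i, c i ∈ A) ∧ ∀ i, Q.ha (c i) = Q.ta (c (i + 1))

/-- The quiver `Q` is acyclic: it has no directed cycle. -/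
def Acyclic (Q : Quiv n) : Prop := Q.AcyclicOn Finset.univ

/-- Undirected adjacency via an arrow from `A`. -/
def AdjOn (Q : Quiv n) (A : Finset (Fin Q.m)) (x y : Fin n) : Prop :=
  ∃ a ∈ A, (Q.ta a = x ∧ Q.ha a = y) ∨ (Q.ta a = y ∧ Q.ha a = x)

/-- The subquiver `(V, A)` is connected as an undirected graph. -/
def ConnectedOn (Q : Quiv n) (V : Finset (Fin n)) (A : Finset (Fin Q.m)) : Prop :=
  ∀ x ∈ V, ∀ y ∈ V, Relation.ReflTransGen (Q.AdjOn A) x y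

/-- The Tits form of the subquiver `(V,A)` is positive definite. -/
def PosDefOn (Q : Quiv n) (V : Finset (Fin n)) (A : Finset (Fin Q.m)) : Prop :=
  ∀ γ : Fin n → ℤ, (∀ i, i ∉ V → γ i = 0) → γ ≠ 0 → 0 < Q.chiSub V A γ γ

/-- The subquiver `(V,A)` is a (nonempty, connected, acyclic, positive-definite
Tits form) Dynkin quiver. -/
def DynkinOn (Q : Quiv n) (V : Finset (Fin n)) (A : Finset (Fin Q.m)) : Prop :=
  V.Nonempty ∧ (∀ a ∈ A, Q.ta a ∈ V ∧ Q.ha a ∈ V) ∧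
    Q.ConnectedOn V A ∧ Q.AcyclicOn A ∧ Q.PosDefOn V A

/-- The set of positive roots of the subquiver `(V,A)`: nonzero dimension
vectors supported on `V` with `χ(β,β) = 1`. -/
def PosRootsOn (Q : Quiv n) (V : Finset (Fin n)) (A : Finset (Fin Q.m)) :
    Set (Fin n → ℕ) :=
  {β | β ≠ 0 ∧ (∀ i, i ∉ V → β i = 0) ∧ Q.chiSub V A (toZ β) (toZ β) = 1}

/-- A Dynkin subquiver partition `Q• = {Q¹,…,Q^ℓ}` of `Q`: each block is a
subquiver `(V j, A j)`, the vertex sets partition `Q₀`, and each block is a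
nonempty connected Dynkin quiver. -/
structure DSP (Q : Quiv n) (ℓ : ℕ) where
  V : Fin ℓ → Finset (Fin n)
  A : Fin ℓ → Finset (Fin Q.m)
  cover : ∀ i : Fin n, ∃! j, i ∈ V j
  dynkin : ∀ j, Q.DynkinOn (V j) (A j)

/-- Arrows of `Q` not belonging to any block, i.e. arrows of the contracted
quiver `P(Q,Q•)`. -/
def DSP.Cut {Q : Quiv n} {ℓ : ℕ} (P : DSP Q ℓ) (a : Fin Q.m) : Prop :=
  ∀ j, a ∉ P.A j

/-- `Q•` is admissible: the contracted quiver `P(Q,Q•)` is acyclic, i.e. there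
is no cyclic sequence of cut arrows in which the block of the head of each
arrow is the block of the tail of the next one. -/
def DSP.Admissible {Q : Quiv n} {ℓ : ℕ} (P : DSP Q ℓ) : Prop :=
  ¬ ∃ (k : ℕ) (c : ZMod (k + 1) → Fin Q.m),
      (∀ i, P.Cut (c i)) ∧
      ∀ i, ∃ j : Fin ℓ, Q.ha (c i) ∈ P.V j ∧ Q.ta (c (i + 1)) ∈ P.V j

/-- `Q•` is ordered: every cut arrow goes from a higher-indexed block (tail)
to a lower-indexed block (head). -/
def DSP.Ordered {Q : Quiv n} {ℓ : ℕ} (P : DSP Q ℓ) : Prop :=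
  ∀ a : Fin Q.m, P.Cut a →
    ∀ j j' : Fin ℓ, Q.ha a ∈ P.V j → Q.ta a ∈ P.V j' → j < j'

/-- `Φ(Q,Q•) = ∪_j Φ^j`. -/
def DSP.Roots {Q : Quiv n} {ℓ : ℕ} (P : DSP Q ℓ) : Set (Fin n → ℕ) :=
  ⋃ j, Q.PosRootsOn (P.V j) (P.A j)

/-- An allowed total order `φ₁ ≺ ⋯ ≺ φ_r` on `Φ(Q,Q•)`: an enumeration such
that for `u < v`, `λ(φ_u,φ_v) ≥ 0` if `φ_u, φ_v` lie in the same `Φ^j` and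
`λ(φ_u,φ_v) ≤ 0` if they lie in different `Φ^j`'s. -/
def DSP.AllowedOrder {Q : Quiv n} {ℓ : ℕ} (P : DSP Q ℓ) {r : ℕ}
    (φ : Fin r → (Fin n → ℕ)) : Prop :=
  Function.Injective φ ∧ Set.range φ = P.Roots ∧
    ∀ u v : Fin r, u < v →
      ((∃ j, φ u ∈ Q.PosRootsOn (P.V j) (P.A j) ∧
          φ v ∈ Q.PosRootsOn (P.V j) (P.A j)) →
        0 ≤ Q.lam (toZ (φ u)) (toZ (φ v))) ∧
      ((¬ ∃ j, φ u ∈ Q.PosRootsOn (P.V j) (P.A j) ∧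
          φ v ∈ Q.PosRootsOn (P.V j) (P.A j)) →
        Q.lam (toZ (φ u)) (toZ (φ v)) ≤ 0)

end Quiv

noncomputable section

open Quiv

/-- The underlying vector space of the completed quantum algebra `Â_Q`:
functions from dimension vectors to `ℚ(t)`. -/
abbrev AQ (n : ℕ) := (Fin n → ℕ) → RatFunc ℚ

/-- The variable `t = q^{1/2}` of `ℚ(t)`. -/
def tq : RatFunc ℚ := RatFunc.X

/-- The unit of `Â_Q`: the indicator function of the zero dimension vector. -/
def oneQ {n : ℕ} : AQ n := fun γ => if γ = 0 then 1 else 0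

/-- The generator `y_γ = −δ_γ` of the quantum algebra. -/
def yQ {n : ℕ} (γ : Fin n → ℕ) : AQ n := fun δ => if δ = γ then -1 else 0

/-- The twisted convolution product of the quantum algebra:
`(f·g)(γ) = Σ_{γ₁+γ₂=γ} t^{λ(γ₁,γ₂)} f(γ₁) g(γ₂)`. -/
def mulQ {n : ℕ} (Q : Quiv n) (f g : AQ n) : AQ n := fun γ =>
  ∑ γ₁ ∈ Finset.Iic γ,
    tq ^ (Q.lam (toZ γ₁) (toZ (γ - γ₁))) * f γ₁ * g (γ - γ₁)

/-- Ordered product of a list of elements of `Â_Q`. -/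
def prodQ {n : ℕ} (Q : Quiv n) (L : List (AQ n)) : AQ n := L.foldr (mulQ Q) oneQ

/-- Power in the quantum algebra. -/
def powQ {n : ℕ} (Q : Quiv n) (f : AQ n) : ℕ → AQ n
  | 0 => oneQ
  | k + 1 => mulQ Q f (powQ Q f k)

/-- `P_k = Π_{j=1}^k (1 − q^j)⁻¹` with `q = t²`, the Poincaré series of
`H^*(BGL(k,ℂ))`. -/
def Pq (k : ℕ) : RatFunc ℚ := ∏ j ∈ Finset.Icc 1 k, (1 - tq ^ (2 * j))⁻¹

/-- The quantum dilogarithm `E(y_γ) = 1 + Σ_{k≥1} (−1)^k t^{k²} P_k y_γ^k`,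
written out as the function supported on the multiples `k • γ`,
with value `t^{k²} P_k` at `k • γ`  (note `y_γ^k = (−1)^k δ_{kγ}`). -/
def Edl {n : ℕ} (γ : Fin n → ℕ) : AQ n := fun δ =>
  ∑ k ∈ Finset.range ((∑ i, δ i) + 1),
    if δ = k • γ then tq ^ (k ^ 2) * Pq k else 0

end
section Aux
namespace Quiv
open Finset

variable {n : ℕ} {Q : Quiv n}

lemma lamA_self (A : Finset (Fin Q.m)) (γ : Fin n → ℤ) : Q.lamA A γ γ = 0 := by
  unfold lamA; exact Finset.sum_eq_zero fun a _ => by ring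

lemma lamA_swap (A : Finset (Fin Q.m)) (γ₁ γ₂ : Fin n → ℤ) :
    Q.lamA A γ₂ γ₁ = - Q.lamA A γ₁ γ₂ := by
  unfold lamA
  rw [← Finset.sum_neg_distrib]
  exact Finset.sum_congr rfl fun a _ => by ring

lemma lam_eq_lamA_univ (γ₁ γ₂ : Fin n → ℤ) :
    Q.lam γ₁ γ₂ = Q.lamA Finset.univ γ₁ γ₂ := by
  unfold lam chi chiSub lamA
  have hS : (∑ i ∈ univ, γ₂ i * γ₁ i) = ∑ i ∈ univ, γ₁ i * γ₂ i :=
    Finset.sum_congr rfl fun i _ => mul_comm _ _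
  rw [hS, Finset.sum_sub_distrib]
  ring

/-- one-step reachability along arrows of `Q` -/
def StRel (Q : Quiv n) (u v : Fin n) : Prop := ∃ a : Fin Q.m, Q.ta a = u ∧ Q.ha a = v

lemma exists_chain_of_transGen {u v : Fin n} (h : Relation.TransGen (StRel Q) u v) :
    ∃ (k : ℕ) (g : ℕ → Fin Q.m), (∀ i, i < k → Q.ha (g i) = Q.ta (g (i+1))) ∧
      Q.ta (g 0) = u ∧ Q.ha (g k) = v := by
  induction h with
  | single h =>
      obtain ⟨a, h1, h2⟩ := h
      exact ⟨0, fun _ => a, fun i hi => absurd hi (by omega), h1, h2⟩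
  | tail hab hbc ih =>
      obtain ⟨k, g, hchain, h0, hk⟩ := ih
      obtain ⟨a, hta, hha⟩ := hbc
      refine ⟨k+1, fun i => if i < k+1 then g i else a, fun i hi => ?_, ?_, ?_⟩
      · by_cases hik : i < k
        · simp only [if_pos (by omega : i < k+1), if_pos (by omega : i+1 < k+1)]
          exact hchain i hik
        · have hi' : i = k := by omega
          subst hi'
          simp only [if_pos (by omega : i < i+1), if_neg (by omega : ¬ (i+1 < i+1))]
          rw [hk, hta]
      · simpa using h0
      · simp [hha]

lemma no_loop (hacyc : Q.Acyclic) (v : Fin n) : ¬ Relation.TransGen (StRel Q) v v := by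
  intro h
  obtain ⟨k, g, hchain, h0, hk⟩ := exists_chain_of_transGen h
  apply hacyc
  refine ⟨k, fun i => g i.val, fun i => Finset.mem_univ _, fun i => ?_⟩
  have hvl : (i : ZMod (k+1)).val < k + 1 := ZMod.val_lt i
  have hadd : ((i + 1 : ZMod (k+1))).val = (i.val + 1 % (k+1)) % (k+1) := by
    rw [ZMod.val_add, ZMod.val_one_eq_one_mod]
  by_cases hik : i.val < k
  · have h1 : (1 : ℕ) % (k+1) = 1 := Nat.mod_eq_of_lt (by omega)
    have h2 : ((i + 1 : ZMod (k+1))).val = i.val + 1 := by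
      rw [hadd, h1, Nat.mod_eq_of_lt (by omega)]
    show Q.ha (g i.val) = Q.ta (g ((i + 1 : ZMod (k+1))).val)
    rw [h2]
    exact hchain i.val hik
  · have hik' : i.val = k := by omega
    have : ((i + 1 : ZMod (k+1))).val = 0 := by
      rw [hadd]
      rcases Nat.eq_zero_or_pos k with hk0 | hk0
      · subst hk0; omega
      · have h1 : (1 : ℕ) % (k+1) = 1 := Nat.mod_eq_of_lt (by omega)
        rw [h1, hik', Nat.mod_self]
    show Q.ha (g i.val) = Q.ta (g ((i + 1 : ZMod (k+1))).val)
    rw [this, hik', hk, h0]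

variable {ℓ : ℕ}

/-- the finset of cut arrows -/
def cutF (Q : Quiv n) (P : DSP Q ℓ) : Finset (Fin Q.m) :=
  Finset.univ.filter (fun a => ∀ j, a ∉ P.A j)

lemma mem_cutF {P : DSP Q ℓ} {a : Fin Q.m} : a ∈ cutF Q P ↔ P.Cut a := by
  simp [cutF, DSP.Cut]

lemma block_eq_of_mem {P : DSP Q ℓ} {i : Fin n} {j j' : Fin ℓ}
    (h : i ∈ P.V j) (h' : i ∈ P.V j') : j = j' :=
  ((P.cover i).unique h h')

lemma posroot_vanish {V : Finset (Fin n)} {A : Finset (Fin Q.m)} {β : Fin n → ℕ}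
    (h : β ∈ Q.PosRootsOn V A) {i : Fin n} (hi : i ∉ V) : β i = 0 := h.2.1 i hi

end Quiv
end Aux
namespace Quiv
open Finset

variable {n : ℕ} {Q : Quiv n}

/-- data of a simple undirected path inside the block `(V, A)` -/
structure PathData (Q : Quiv n) (V : Finset (Fin n)) (A : Finset (Fin Q.m)) where
  m : ℕ
  z : ℕ → Fin n
  w : ℕ → Fin Q.m
  hzV : ∀ t, t ≤ m → z t ∈ V
  hinj : ∀ s t, s ≤ m → t ≤ m → z s = z t → s = t
  hwA : ∀ t, t < m → w t ∈ A
  hwd : ∀ t, t < m → (Q.ta (w t) = z t ∧ Q.ha (w t) = z (t+1)) ∨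
                     (Q.ta (w t) = z (t+1) ∧ Q.ha (w t) = z t)

namespace PathData

variable {V : Finset (Fin n)} {A : Finset (Fin Q.m)} (pd : PathData Q V A)

/-- indicator vector of the path segment `[p,q]` -/
def sig (p q : ℕ) : Fin n → ℕ :=
  fun i => if i ∈ (Finset.Icc p q).image pd.z then 1 else 0

lemma toZ_sig (p q : ℕ) (i : Fin n) :
    toZ (pd.sig p q) i = if i ∈ (Finset.Icc p q).image pd.z then (1:ℤ) else 0 := by
  unfold toZ sig; split_ifs <;> simp

lemma sig_z_one {p q v : ℕ} (hp : p ≤ v) (hq : v ≤ q) : pd.sig p q (pd.z v) = 1 := by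
  unfold sig
  rw [if_pos (Finset.mem_image.2 ⟨v, Finset.mem_Icc.2 ⟨hp, hq⟩, rfl⟩)]

lemma sig_z_zero {p q v : ℕ} (hq : q ≤ pd.m) (hv : v ≤ pd.m) (h : ¬ (p ≤ v ∧ v ≤ q)) :
    pd.sig p q (pd.z v) = 0 := by
  unfold sig
  apply if_neg
  intro hmem
  obtain ⟨t, ht, hzt⟩ := Finset.mem_image.1 hmem
  rw [Finset.mem_Icc] at ht
  have := pd.hinj t v (le_trans ht.2 hq) hv hzt
  omega

lemma sig_zero_of_not_full {p q : ℕ} {i : Fin n} (hq : q ≤ pd.m)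
    (h : i ∉ (Finset.Icc 0 pd.m).image pd.z) : pd.sig p q i = 0 := by
  unfold sig
  apply if_neg
  intro hmem
  obtain ⟨t, ht, hzt⟩ := Finset.mem_image.1 hmem
  rw [Finset.mem_Icc] at ht
  exact h (Finset.mem_image.2 ⟨t, Finset.mem_Icc.2 ⟨Nat.zero_le _, le_trans ht.2 hq⟩, hzt⟩)

lemma sig_supp {p q : ℕ} {i : Fin n} (h : pd.sig p q i ≠ 0) :
    ∃ v, p ≤ v ∧ v ≤ q ∧ pd.z v = i := by
  unfold sig at h
  by_cases hmem : i ∈ (Finset.Icc p q).image pd.z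
  · obtain ⟨t, ht, hzt⟩ := Finset.mem_image.1 hmem
    rw [Finset.mem_Icc] at ht
    exact ⟨t, ht.1, ht.2, hzt⟩
  · rw [if_neg hmem] at h; exact absurd rfl h

lemma toZ_one {p q v : ℕ} (hp : p ≤ v) (hq : v ≤ q) :
    toZ (pd.sig p q) (pd.z v) = 1 := by
  unfold toZ; rw [pd.sig_z_one hp hq]; norm_num

lemma toZ_zero {p q v : ℕ} (hq : q ≤ pd.m) (hv : v ≤ pd.m) (h : ¬ (p ≤ v ∧ v ≤ q)) :
    toZ (pd.sig p q) (pd.z v) = 0 := by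
  unfold toZ; rw [pd.sig_z_zero hq hv h]; norm_num

lemma toZ_zero_of_not_full {p q : ℕ} {i : Fin n} (hq : q ≤ pd.m)
    (h : i ∉ (Finset.Icc 0 pd.m).image pd.z) : toZ (pd.sig p q) i = 0 := by
  unfold toZ; rw [pd.sig_zero_of_not_full hq h]; norm_num

lemma w_inj {s t : ℕ} (hs : s < pd.m) (ht : t < pd.m) (h : pd.w s = pd.w t) : s = t := by
  have hs1 : s ≤ pd.m := le_of_lt hs
  have hs2 : s + 1 ≤ pd.m := hs
  have ht1 : t ≤ pd.m := le_of_lt ht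
  have ht2 : t + 1 ≤ pd.m := ht
  rcases pd.hwd s hs with ⟨hta, hha⟩ | ⟨hta, hha⟩ <;>
    rcases pd.hwd t ht with ⟨hta', hha'⟩ | ⟨hta', hha'⟩
  · exact pd.hinj s t hs1 ht1 (by rw [← hta, ← hta', h])
  · have e1 : s = t + 1 := pd.hinj s (t+1) hs1 ht2 (by rw [← hta, ← hta', h])
    have e2 : s + 1 = t := pd.hinj (s+1) t hs2 ht1 (by rw [← hha, ← hha', h])
    omega
  · have e1 : s + 1 = t := pd.hinj (s+1) t hs2 ht1 (by rw [← hta, ← hta', h])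
    have e2 : s = t + 1 := pd.hinj s (t+1) hs1 ht2 (by rw [← hha, ← hha', h])
    omega
  · have e1 : s + 1 = t + 1 := pd.hinj (s+1) (t+1) hs2 ht2 (by rw [← hta, ← hta', h])
    omega

lemma sig_vertex_sum {p q : ℕ} (hpq : p ≤ q) (hq : q ≤ pd.m) :
    ∑ i ∈ V, toZ (pd.sig p q) i * toZ (pd.sig p q) i = (q + 1 - p : ℕ) := by
  have h1 : ∀ i ∈ V, toZ (pd.sig p q) i * toZ (pd.sig p q) i
      = if i ∈ (Finset.Icc p q).image pd.z then (1:ℤ) else 0 := by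
    intro i _
    rw [pd.toZ_sig]
    split_ifs <;> ring
  rw [Finset.sum_congr rfl h1, Finset.sum_boole]
  have himg : (Finset.Icc p q).image pd.z ⊆ V := by
    intro i hi
    obtain ⟨t, ht, hzt⟩ := Finset.mem_image.1 hi
    rw [Finset.mem_Icc] at ht
    exact hzt ▸ pd.hzV t (le_trans ht.2 hq)
  have hfil : V.filter (fun i => i ∈ (Finset.Icc p q).image pd.z)
      = (Finset.Icc p q).image pd.z := by
    apply Finset.ext
    intro i
    simp only [Finset.mem_filter]
    exact ⟨fun h => h.2, fun h => ⟨himg h, h⟩⟩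
  rw [hfil, Finset.card_image_of_injOn, Nat.card_Icc]
  intro s hs t ht h
  simp only [Finset.coe_Icc, Set.mem_Icc] at hs ht
  exact pd.hinj s t (le_trans hs.2 hq) (le_trans ht.2 hq) h

lemma sig_edge_sum (p q : ℕ) :
    ∑ a ∈ A, toZ (pd.sig p q) (Q.ta a) * toZ (pd.sig p q) (Q.ha a)
      = ((A.filter fun a => Q.ta a ∈ (Finset.Icc p q).image pd.z ∧
          Q.ha a ∈ (Finset.Icc p q).image pd.z).card : ℤ) := by
  have h1 : ∀ a ∈ A, toZ (pd.sig p q) (Q.ta a) * toZ (pd.sig p q) (Q.ha a)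
      = if (Q.ta a ∈ (Finset.Icc p q).image pd.z ∧ Q.ha a ∈ (Finset.Icc p q).image pd.z)
        then (1:ℤ) else 0 := by
    intro a _
    rw [pd.toZ_sig, pd.toZ_sig]
    by_cases h2 : Q.ta a ∈ (Finset.Icc p q).image pd.z
    · by_cases h3 : Q.ha a ∈ (Finset.Icc p q).image pd.z
      · rw [if_pos h2, if_pos h3, if_pos ⟨h2, h3⟩]; ring
      · have hn : ¬ (Q.ta a ∈ (Finset.Icc p q).image pd.z ∧
            Q.ha a ∈ (Finset.Icc p q).image pd.z) := fun hc => h3 hc.2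
        rw [if_pos h2, if_neg h3, if_neg hn]; ring
    · have hn : ¬ (Q.ta a ∈ (Finset.Icc p q).image pd.z ∧
          Q.ha a ∈ (Finset.Icc p q).image pd.z) := fun hc => h2 hc.1
      rw [if_neg h2, if_neg hn]
      by_cases h3 : Q.ha a ∈ (Finset.Icc p q).image pd.z <;>
        [rw [if_pos h3]; rw [if_neg h3]] <;> ring
  rw [Finset.sum_congr rfl h1, Finset.sum_boole]

lemma w_subset {p q : ℕ} (hq : q ≤ pd.m) :
    (Finset.Ico p q).image pd.w ⊆
      (A.filter fun a => Q.ta a ∈ (Finset.Icc p q).image pd.z ∧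
        Q.ha a ∈ (Finset.Icc p q).image pd.z) := by
  intro b hb
  obtain ⟨s, hs, hws⟩ := Finset.mem_image.1 hb
  rw [Finset.mem_Ico] at hs
  have hsm : s < pd.m := lt_of_lt_of_le hs.2 hq
  rw [Finset.mem_filter]
  have hz1 : pd.z s ∈ (Finset.Icc p q).image pd.z :=
    Finset.mem_image.2 ⟨s, Finset.mem_Icc.2 ⟨hs.1, le_of_lt hs.2⟩, rfl⟩
  have hz2 : pd.z (s+1) ∈ (Finset.Icc p q).image pd.z :=
    Finset.mem_image.2 ⟨s+1, Finset.mem_Icc.2 ⟨by omega, hs.2⟩, rfl⟩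
  refine ⟨hws ▸ pd.hwA s hsm, ?_⟩
  rcases pd.hwd s hsm with ⟨hta, hha⟩ | ⟨hta, hha⟩ <;> rw [← hws] at * <;>
    [exact ⟨hta ▸ hz1, hha ▸ hz2⟩; exact ⟨hta ▸ hz2, hha ▸ hz1⟩]

lemma w_card (p q : ℕ) (hq : q ≤ pd.m) :
    ((Finset.Ico p q).image pd.w).card = q - p := by
  rw [Finset.card_image_of_injOn, Nat.card_Ico]
  intro s hs t ht h
  simp only [Finset.coe_Ico, Set.mem_Ico] at hs ht
  exact pd.w_inj (lt_of_lt_of_le hs.2 hq) (lt_of_lt_of_le ht.2 hq) h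

lemma segE (hpos : Q.PosDefOn V A) {p q : ℕ} (hpq : p ≤ q) (hq : q ≤ pd.m) :
    (A.filter fun a => Q.ta a ∈ (Finset.Icc p q).image pd.z ∧
      Q.ha a ∈ (Finset.Icc p q).image pd.z) = (Finset.Ico p q).image pd.w := by
  have hsub := pd.w_subset (A := A) (p := p) hq
  apply (Finset.eq_of_subset_of_card_le hsub ?_).symm
  rw [pd.w_card p q hq]
  -- card E ≤ q - p from positive definiteness
  have hvan : ∀ i, i ∉ V → toZ (pd.sig p q) i = 0 := by
    intro i hi
    rw [pd.toZ_sig]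
    apply if_neg
    intro hmem
    obtain ⟨t, ht, hzt⟩ := Finset.mem_image.1 hmem
    rw [Finset.mem_Icc] at ht
    exact hi (hzt ▸ pd.hzV t (le_trans ht.2 hq))
  have hne : toZ (pd.sig p q) ≠ 0 := by
    intro h0
    have := congrFun h0 (pd.z p)
    rw [toZ] at this
    rw [pd.sig_z_one (le_refl p) hpq] at this
    simp at this
  have hchi := hpos (toZ (pd.sig p q)) hvan hne
  unfold chiSub at hchi
  rw [pd.sig_vertex_sum hpq hq, pd.sig_edge_sum] at hchi
  omega

lemma sig_root (hpos : Q.PosDefOn V A) {p q : ℕ} (hpq : p ≤ q) (hq : q ≤ pd.m) :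
    pd.sig p q ∈ Q.PosRootsOn V A := by
  refine ⟨?_, ?_, ?_⟩
  · intro h0
    have := congrFun h0 (pd.z p)
    rw [pd.sig_z_one (le_refl p) hpq] at this
    simp at this
  · intro i hi
    unfold sig
    apply if_neg
    intro hmem
    obtain ⟨t, ht, hzt⟩ := Finset.mem_image.1 hmem
    rw [Finset.mem_Icc] at ht
    exact hi (hzt ▸ pd.hzV t (le_trans ht.2 hq))
  · unfold chiSub
    rw [pd.sig_vertex_sum hpq hq, pd.sig_edge_sum, pd.segE hpos hpq hq, pd.w_card p q hq]
    omega

/-- the key within-block forcing computation -/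
lemma step (hpos : Q.PosDefOn V A) {p s u : ℕ} (hp : p ≤ s) (hsu : s + 1 ≤ u)
    (hu : u ≤ pd.m)
    (hta : Q.ta (pd.w s) = pd.z (s+1)) (hha : Q.ha (pd.w s) = pd.z s) :
    Q.lamA A (toZ (pd.sig (s+1) u)) (toZ (pd.sig p s)) = 1 := by
  have hsm : s < pd.m := by omega
  unfold lamA
  rw [Finset.sum_eq_single_of_mem (pd.w s) (pd.hwA s hsm)]
  · rw [hta, hha,
      pd.toZ_one (le_refl (s+1)) hsu, pd.toZ_one hp (le_refl s),
      pd.toZ_zero (q := s) (le_trans (by omega) hu) (by omega) (by omega),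
      pd.toZ_zero (q := u) hu (by omega) (by omega)]
    ring
  · intro b hbA hbne
    by_cases hta' : Q.ta b ∈ (Finset.Icc 0 pd.m).image pd.z
    · by_cases hha' : Q.ha b ∈ (Finset.Icc 0 pd.m).image pd.z
      · -- b is a path arrow w s' with s' ≠ s
        have hbE : b ∈ (A.filter fun a => Q.ta a ∈ (Finset.Icc 0 pd.m).image pd.z ∧
            Q.ha a ∈ (Finset.Icc 0 pd.m).image pd.z) := Finset.mem_filter.2 ⟨hbA, hta', hha'⟩
        rw [pd.segE hpos (Nat.zero_le _) (le_refl _)] at hbE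
        obtain ⟨s', hs', hws'⟩ := Finset.mem_image.1 hbE
        rw [Finset.mem_Ico] at hs'
        have hs'm : s' < pd.m := hs'.2
        have hne : s' ≠ s := by
          intro h; exact hbne (by rw [← hws', h])
        -- endpoints of b are z s' and z (s'+1) in some order
        have hend : (Q.ta b = pd.z s' ∧ Q.ha b = pd.z (s'+1)) ∨
            (Q.ta b = pd.z (s'+1) ∧ Q.ha b = pd.z s') := by
          rcases pd.hwd s' hs'm with h | h
          · exact Or.inl ⟨by rw [← hws']; exact h.1, by rw [← hws']; exact h.2⟩
          · exact Or.inr ⟨by rw [← hws']; exact h.1, by rw [← hws']; exact h.2⟩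
        rcases Nat.lt_or_ge s' s with hlt | hge
        · -- s' < s : σI vanishes on both endpoints
          have e1 : toZ (pd.sig (s+1) u) (pd.z s') = 0 :=
            pd.toZ_zero hu (by omega) (by omega)
          have e2 : toZ (pd.sig (s+1) u) (pd.z (s'+1)) = 0 :=
            pd.toZ_zero hu (by omega) (by omega)
          rcases hend with ⟨h1, h2⟩ | ⟨h1, h2⟩ <;> rw [h1, h2] <;>
            first
            | (rw [e1, e2]; ring)
            | (rw [e2, e1]; ring)
        · have hgt : s < s' := by omega
          have e1 : toZ (pd.sig p s) (pd.z s') = 0 :=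
            pd.toZ_zero (le_trans (by omega) hu) (by omega) (by omega)
          have e2 : toZ (pd.sig p s) (pd.z (s'+1)) = 0 :=
            pd.toZ_zero (le_trans (by omega) hu) (by omega) (by omega)
          rcases hend with ⟨h1, h2⟩ | ⟨h1, h2⟩ <;> rw [h1, h2] <;>
            first
            | (rw [e1, e2]; ring)
            | (rw [e2, e1]; ring)
      · have e1 : toZ (pd.sig (s+1) u) (Q.ha b) = 0 :=
          pd.toZ_zero_of_not_full hu hha'
        have e2 : toZ (pd.sig p s) (Q.ha b) = 0 :=
          pd.toZ_zero_of_not_full (le_trans (by omega) hu) hha'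
        rw [e1, e2]; ring
    · have e1 : toZ (pd.sig (s+1) u) (Q.ta b) = 0 :=
        pd.toZ_zero_of_not_full hu hta'
      have e2 : toZ (pd.sig p s) (Q.ta b) = 0 :=
        pd.toZ_zero_of_not_full (le_trans (by omega) hu) hta'
      rw [e1, e2]; ring

end PathData
end Quiv
namespace Quiv
namespace PathData
open Finset

variable {n : ℕ} {Q : Quiv n} {V : Finset (Fin n)} {A : Finset (Fin Q.m)}
variable (pd : PathData Q V A)

def Fwd (s : ℕ) : Prop := Q.ta (pd.w s) = pd.z s ∧ Q.ha (pd.w s) = pd.z (s+1)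

def Bwd (s : ℕ) : Prop := Q.ta (pd.w s) = pd.z (s+1) ∧ Q.ha (pd.w s) = pd.z s

lemma fwd_or_bwd {s : ℕ} (hs : s < pd.m) : pd.Fwd s ∨ pd.Bwd s := pd.hwd s hs

lemma exists_runStart (q : ℕ) (hq : q ≤ pd.m) :
    ∃ p, p ≤ q ∧ (∀ s, p ≤ s → s < q → pd.Fwd s) ∧ (p = 0 ∨ (1 ≤ p ∧ pd.Bwd (p-1))) := by
  classical
  have hex : ∃ p, p ≤ q ∧ ∀ s, p ≤ s → s < q → pd.Fwd s :=
    ⟨q, le_refl q, fun s hs hs' => absurd (lt_of_le_of_lt hs hs') (lt_irrefl q)⟩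
  set p₀ := Nat.find hex with hp₀
  obtain ⟨hle, hfwd⟩ := Nat.find_spec hex
  refine ⟨p₀, hle, hfwd, ?_⟩
  rcases Nat.eq_zero_or_pos p₀ with h0 | hpos
  · exact Or.inl h0
  · right
    refine ⟨hpos, ?_⟩
    have hmin := Nat.find_min hex (m := p₀ - 1) (by omega)
    push_neg at hmin
    obtain ⟨s, hs1, hs2, hs3⟩ := hmin (by omega)
    have hs4 : s = p₀ - 1 := by
      by_contra hne
      exact hs3 (hfwd s (by omega) hs2)
    rw [← hs4]
    rcases pd.fwd_or_bwd (lt_of_lt_of_le hs2 hq) with h | h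
    · exact absurd h hs3
    · exact h

lemma desc (hpos : Q.PosDefOn V A) (F : (Fin n → ℕ) → ℕ)
    (hF : ∀ β γ, β ∈ Q.PosRootsOn V A → γ ∈ Q.PosRootsOn V A →
      0 < Q.lamA A (toZ β) (toZ γ) → F β < F γ) :
    ∀ t u, t ≤ u → u ≤ pd.m → (∀ s, t ≤ s → s < u → pd.Fwd s) →
      (t = 0 ∨ (1 ≤ t ∧ pd.Bwd (t-1))) →
      ∃ u', u' ≤ pd.m ∧ (∀ s, s < u' → pd.Fwd s) ∧ F (pd.sig t u) ≤ F (pd.sig 0 u') := by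
  intro t
  induction t using Nat.strong_induction_on with
  | _ t ih =>
    intro u htu hu hfwd hinv
    rcases hinv with h0 | ⟨h1, hb⟩
    · subst h0
      exact ⟨u, hu, fun s hs => hfwd s (Nat.zero_le s) hs, le_refl _⟩
    · set t' := t - 1 with ht'
      have htt' : t = t' + 1 := by omega
      obtain ⟨p, hple, hfwd', hinv'⟩ := pd.exists_runStart t' (by omega)
      have hstep : Q.lamA A (toZ (pd.sig (t'+1) u)) (toZ (pd.sig p t')) = 1 :=
        pd.step hpos hple (by omega) hu hb.1 hb.2
      have hroot1 : pd.sig (t'+1) u ∈ Q.PosRootsOn V A :=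
        pd.sig_root hpos (by omega) hu
      have hroot2 : pd.sig p t' ∈ Q.PosRootsOn V A :=
        pd.sig_root hpos hple (by omega)
      have hlt : F (pd.sig (t'+1) u) < F (pd.sig p t') :=
        hF _ _ hroot1 hroot2 (by rw [hstep]; norm_num)
      obtain ⟨u', hu', hfwd0, hle⟩ :=
        ih p (by omega) t' hple (by omega) hfwd' hinv'
      refine ⟨u', hu', hfwd0, ?_⟩
      rw [htt']
      exact le_trans (le_of_lt hlt) hle

lemma reach_end {p q : ℕ} (hq : q ≤ pd.m) (hfwd : ∀ s, p ≤ s → s < q → pd.Fwd s) :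
    ∀ d v, v + d = q → p ≤ v → Relation.ReflTransGen (StRel Q) (pd.z v) (pd.z q) := by
  intro d
  induction d with
  | zero =>
    intro v h _
    have hv : v = q := by omega
    rw [hv]
  | succ d ihd =>
    intro v h hp
    have hstep : StRel Q (pd.z v) (pd.z (v+1)) :=
      ⟨pd.w v, (hfwd v hp (by omega)).1, (hfwd v hp (by omega)).2⟩
    exact Relation.ReflTransGen.head hstep (ihd (v+1) (by omega) (by omega))

lemma reach_start {q : ℕ} (hq : q ≤ pd.m) (hfwd : ∀ s, s < q → pd.Fwd s) :
    ∀ v, v ≤ q → Relation.ReflTransGen (StRel Q) (pd.z 0) (pd.z v) := by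
  intro v
  induction v with
  | zero => intro _; exact Relation.ReflTransGen.refl
  | succ v ihv =>
    intro hvq
    have hstep : StRel Q (pd.z v) (pd.z (v+1)) :=
      ⟨pd.w v, (hfwd v (by omega)).1, (hfwd v (by omega)).2⟩
    exact Relation.ReflTransGen.tail (ihv (by omega)) hstep

lemma visit_core (hpos : Q.PosDefOn V A) (F : (Fin n → ℕ) → ℕ)
    (hF : ∀ β γ, β ∈ Q.PosRootsOn V A → γ ∈ Q.PosRootsOn V A →
      0 < Q.lamA A (toZ β) (toZ γ) → F β < F γ) :
    ∃ β γ, β ∈ Q.PosRootsOn V A ∧ γ ∈ Q.PosRootsOn V A ∧ F β ≤ F γ ∧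
      β (pd.z pd.m) ≠ 0 ∧ γ (pd.z 0) ≠ 0 ∧
      (∀ i, β i ≠ 0 → Relation.ReflTransGen (StRel Q) i (pd.z pd.m)) ∧
      (∀ i, γ i ≠ 0 → Relation.ReflTransGen (StRel Q) (pd.z 0) i) := by
  obtain ⟨t₀, ht₀, hfwd, hinv⟩ := pd.exists_runStart pd.m (le_refl _)
  obtain ⟨u', hu', hfwd0, hle⟩ := pd.desc hpos F hF t₀ pd.m ht₀ (le_refl _) hfwd hinv
  refine ⟨pd.sig t₀ pd.m, pd.sig 0 u', pd.sig_root hpos ht₀ (le_refl _),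
    pd.sig_root hpos (Nat.zero_le _) hu', hle, ?_, ?_, ?_, ?_⟩
  · rw [pd.sig_z_one ht₀ (le_refl _)]; omega
  · rw [pd.sig_z_one (le_refl 0) (Nat.zero_le _)]; omega
  · intro i hi
    obtain ⟨v, hv1, hv2, hv3⟩ := pd.sig_supp hi
    rw [← hv3]
    exact pd.reach_end (le_refl _) hfwd (pd.m - v) v (by omega) hv1
  · intro i hi
    obtain ⟨v, _, hv2, hv3⟩ := pd.sig_supp hi
    rw [← hv3]
    exact pd.reach_start hu' hfwd0 v hv2

end PathData
end Quiv
namespace Quiv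
open Finset

variable {n : ℕ} {Q : Quiv n}

lemma rtg_nodup_chain {α : Type*} {R : α → α → Prop} {y x : α}
    (h : Relation.ReflTransGen R y x) :
    ∃ l : List α, List.Chain' R (y :: l) ∧
      (y :: l).getLast? = some x ∧ (y :: l).Nodup := by
  classical
  induction h using Relation.ReflTransGen.head_induction_on with
  | refl => exact ⟨[], List.isChain_singleton _, by simp, by simp⟩
  | head h' _ ih =>
    rename_i y' c _
    obtain ⟨l', hch, hlast, hnd⟩ := ih
    by_cases hmem : y' ∈ c :: l'
    · obtain ⟨s, t, hst⟩ := List.append_of_mem hmem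
      have hsuff : (y' :: t) <:+ (c :: l') := ⟨s, hst.symm⟩
      refine ⟨t, ?_, ?_, ?_⟩
      · exact hch.suffix hsuff
      · rw [hst, List.getLast?_append_of_ne_nil s (by simp)] at hlast
        exact hlast
      · exact (hsuff.sublist).nodup hnd
    · refine ⟨c :: l', List.isChain_cons_cons.2 ⟨h', hch⟩, ?_, List.Nodup.cons hmem hnd⟩
      rw [List.getLast?_cons_cons]
      exact hlast

/-- extract a `PathData` joining two vertices of a connected block -/
lemma exists_pathData {V : Finset (Fin n)} {A : Finset (Fin Q.m)}
    (hAend : ∀ a ∈ A, Q.ta a ∈ V ∧ Q.ha a ∈ V)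
    (hconn : Q.ConnectedOn V A) (a₀ : Fin Q.m)
    {y x : Fin n} (hy : y ∈ V) (hx : x ∈ V) :
    ∃ pd : PathData Q V A, pd.z 0 = y ∧ pd.z pd.m = x := by
  classical
  obtain ⟨l, hch, hlast, hnd⟩ := rtg_nodup_chain (hconn y hy x hx)
  set L := y :: l with hL
  have hLne : L ≠ [] := by simp [hL]
  set m := L.length - 1 with hm
  have hLlen : L.length = m + 1 := by
    simp only [hL, List.length_cons] at hm ⊢
    omega
  set z : ℕ → Fin n := fun t => L.getD t y with hz
  have hget : ∀ t, t ≤ m → ∀ (h : t < L.length), z t = L.get ⟨t, h⟩ := by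
    intro t _ h
    simp only [hz]
    exact List.getD_eq_get L y ⟨t, h⟩
  have hz0 : z 0 = y := by simp [hz, hL]
  have hzm : z m = x := by
    have h1 : m < L.length := by omega
    have h2 := List.getLast?_eq_getLast hLne
    rw [hlast] at h2
    have h3 : L.getLast hLne = x := by
      exact (Option.some.injEq _ _ ▸ h2.symm : _)
    rw [hget m (le_refl m) h1, ← h3, List.getLast_eq_getElem]
    rfl
  have hinj : ∀ s t, s ≤ m → t ≤ m → z s = z t → s = t := by
    intro s t hs ht he
    have h1 : s < L.length := by omega
    have h2 : t < L.length := by omega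
    rw [hget s hs h1, hget t ht h2] at he
    have := (hnd.get_inj_iff).1 he
    exact congrArg Fin.val this
  have hadj : ∀ t, t < m → Q.AdjOn A (z t) (z (t+1)) := by
    intro t ht
    have h1 : t < L.length - 1 := by omega
    have := List.isChain_iff_getElem.1 hch t (by omega)
    rw [hget t (by omega) (by omega), hget (t+1) (by omega) (by omega)]
    exact this
  set w : ℕ → Fin Q.m := fun t => if h : t < m then (hadj t h).choose else a₀ with hw
  have hwspec : ∀ t, t < m → w t ∈ A ∧
      ((Q.ta (w t) = z t ∧ Q.ha (w t) = z (t+1)) ∨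
       (Q.ta (w t) = z (t+1) ∧ Q.ha (w t) = z t)) := by
    intro t ht
    have hsp := (hadj t ht).choose_spec
    simp only [hw, dif_pos ht]
    exact ⟨hsp.1, hsp.2⟩
  have hzV : ∀ t, t ≤ m → z t ∈ V := by
    intro t ht
    rcases Nat.lt_or_ge t m with h | h
    · obtain ⟨hA, hd⟩ := hwspec t h
      rcases hd with ⟨h1, _⟩ | ⟨_, h2⟩
      · exact h1 ▸ (hAend _ hA).1
      · exact h2 ▸ (hAend _ hA).2
    · have : t = m := by omega
      rw [this, hzm]; exact hx
  exact ⟨⟨m, z, w, hzV, hinj, fun t ht => (hwspec t ht).1, fun t ht => (hwspec t ht).2⟩,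
    hz0, hzm⟩

end Quiv

/-- If a Dynkin subquiver partition `Q•` of an acyclic quiver `Q`
admits an enumeration `φ₁,…,φ_r` of `Φ(Q,Q•)` satisfying the ordering rules
(for `u < v`: `λ_{Q^j₁}(φ_u,φ_v) ≥ 0` and `λ_{Q₁∖Q^j₁}(φ_u,φ_v) ≤ 0` for
same-block pairs, `λ(φ_u,φ_v) ≤ 0` for different-block pairs), then `Q•` is
admissible, i.e. the contracted quiver `P(Q,Q•)` is acyclic. -/
theorem statement3 {n ℓ r : ℕ} (Q : Quiv n) (hacyc : Q.Acyclic)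
    (P : Quiv.DSP Q ℓ)
    (φ : Fin r → (Fin n → ℕ)) (hinj : Function.Injective φ)
    (hrange : Set.range φ = P.Roots)
    (hsame : ∀ u v : Fin r, u < v → ∀ j : Fin ℓ,
      φ u ∈ Q.PosRootsOn (P.V j) (P.A j) → φ v ∈ Q.PosRootsOn (P.V j) (P.A j) →
        0 ≤ Q.lamA (P.A j) (Quiv.toZ (φ u)) (Quiv.toZ (φ v)) ∧
        Q.lamA (Finset.univ \ P.A j) (Quiv.toZ (φ u)) (Quiv.toZ (φ v)) ≤ 0)
    (hdiff : ∀ u v : Fin r, u < v →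
      (¬ ∃ j : Fin ℓ, φ u ∈ Q.PosRootsOn (P.V j) (P.A j) ∧
          φ v ∈ Q.PosRootsOn (P.V j) (P.A j)) →
        Q.lam (Quiv.toZ (φ u)) (Quiv.toZ (φ v)) ≤ 0) :
    P.Admissible := by
  classical
  rintro ⟨k, c, hcut, hblk⟩
  choose j hyV hxV using hblk
  -- every positive root of a block is in the range of φ
  have hmem_range : ∀ {jj : Fin ℓ} {β : Fin n → ℕ},
      β ∈ Q.PosRootsOn (P.V jj) (P.A jj) → ∃ u : Fin r, φ u = β := by
    intro jj β hβ
    have hβ' : β ∈ P.Roots := Set.mem_iUnion.2 ⟨jj, hβ⟩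
    rw [← hrange] at hβ'
    exact hβ'
  -- position function on roots
  set F : (Fin n → ℕ) → ℕ :=
    fun β => if h : ∃ u : Fin r, φ u = β then (h.choose).val else 0 with hFdef
  have hFspec : ∀ (β : Fin n → ℕ) (h : ∃ u : Fin r, φ u = β),
      ∃ u : Fin r, φ u = β ∧ u.val = F β := by
    intro β h
    refine ⟨h.choose, h.choose_spec, ?_⟩
    simp only [hFdef, dif_pos h]
  -- within-block forcing
  have hforceA : ∀ (jj : Fin ℓ) (β γ : Fin n → ℕ),
      β ∈ Q.PosRootsOn (P.V jj) (P.A jj) → γ ∈ Q.PosRootsOn (P.V jj) (P.A jj) →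
      0 < Q.lamA (P.A jj) (Quiv.toZ β) (Quiv.toZ γ) → F β < F γ := by
    intro jj β γ hβ hγ hpos
    obtain ⟨u, hu, huv⟩ := hFspec β (hmem_range hβ)
    obtain ⟨v, hv, hvv⟩ := hFspec γ (hmem_range hγ)
    rcases lt_trichotomy u v with h | h | h
    · rw [← huv, ← hvv]
      exact h
    · exfalso
      rw [← hu, h, hv] at hpos
      rw [Quiv.lamA_self] at hpos
      exact lt_irrefl 0 hpos
    · exfalso
      have h1 := (hsame v u h jj (by rw [hv]; exact hγ) (by rw [hu]; exact hβ)).1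
      rw [hu, hv, Quiv.lamA_swap] at h1
      omega
  -- cut forcing (reversing)
  have hforceC : ∀ (j₁ j₂ : Fin ℓ) (β γ : Fin n → ℕ),
      β ∈ Q.PosRootsOn (P.V j₁) (P.A j₁) → γ ∈ Q.PosRootsOn (P.V j₂) (P.A j₂) →
      0 < Q.lamA (Quiv.cutF Q P) (Quiv.toZ β) (Quiv.toZ γ) → F γ < F β := by
    intro j₁ j₂ β γ hβ hγ hpos
    obtain ⟨u, hu, huv⟩ := hFspec β (hmem_range hβ)
    obtain ⟨v, hv, hvv⟩ := hFspec γ (hmem_range hγ)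
    rcases lt_trichotomy u v with h | h | h
    · exfalso
      by_cases hcom : ∃ j₃, φ u ∈ Q.PosRootsOn (P.V j₃) (P.A j₃) ∧
          φ v ∈ Q.PosRootsOn (P.V j₃) (P.A j₃)
      · obtain ⟨j₃, h1, h2⟩ := hcom
        have h3 := (hsame u v h j₃ h1 h2).2
        have heq : Q.lamA (Quiv.cutF Q P) (Quiv.toZ (φ u)) (Quiv.toZ (φ v))
            = Q.lamA (Finset.univ \ P.A j₃) (Quiv.toZ (φ u)) (Quiv.toZ (φ v)) := by
          unfold Quiv.lamA
          apply Finset.sum_subset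
          · intro a ha
            rw [Quiv.mem_cutF] at ha
            exact Finset.mem_sdiff.2 ⟨Finset.mem_univ a, ha j₃⟩
          · intro a ha hnc
            rw [Quiv.mem_cutF] at hnc
            unfold Quiv.DSP.Cut at hnc
            push_neg at hnc
            obtain ⟨j₄, hj₄⟩ := hnc
            have hj₄ne : j₄ ≠ j₃ := by
              intro hq; rw [hq] at hj₄
              exact (Finset.mem_sdiff.1 ha).2 hj₄
            obtain ⟨hta, hha⟩ := (P.dynkin j₄).2.1 a hj₄
            have hv1 : φ u (Q.ta a) = 0 := by
              apply Quiv.posroot_vanish h1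
              intro hmem
              exact hj₄ne (Quiv.block_eq_of_mem hta hmem)
            have hv2 : φ u (Q.ha a) = 0 := by
              apply Quiv.posroot_vanish h1
              intro hmem
              exact hj₄ne (Quiv.block_eq_of_mem hha hmem)
            unfold Quiv.toZ
            rw [hv1, hv2]
            push_cast
            ring
        rw [← hu, ← hv, heq] at hpos
        omega
      · have h3 := hdiff u v h hcom
        rw [Quiv.lam_eq_lamA_univ] at h3
        have heq : Q.lamA (Quiv.cutF Q P) (Quiv.toZ (φ u)) (Quiv.toZ (φ v))
            = Q.lamA Finset.univ (Quiv.toZ (φ u)) (Quiv.toZ (φ v)) := by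
          unfold Quiv.lamA
          apply Finset.sum_subset (Finset.subset_univ _)
          intro a _ hnc
          rw [Quiv.mem_cutF] at hnc
          unfold Quiv.DSP.Cut at hnc
          push_neg at hnc
          obtain ⟨j₄, hj₄⟩ := hnc
          obtain ⟨hta, hha⟩ := (P.dynkin j₄).2.1 a hj₄
          by_cases hj₁ : j₄ = j₁
          · by_cases hj₂ : j₄ = j₂
            · exact absurd ⟨j₁, by rw [hu]; exact hβ,
                by rw [hv, ← hj₁, hj₂]; exact hγ⟩ hcom
            · have hv1 : φ v (Q.ta a) = 0 := by
                apply Quiv.posroot_vanish (by rw [hv]; exact hγ : φ v ∈ _)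
                intro hmem
                exact hj₂ (Quiv.block_eq_of_mem hta hmem)
              have hv2 : φ v (Q.ha a) = 0 := by
                apply Quiv.posroot_vanish (by rw [hv]; exact hγ : φ v ∈ _)
                intro hmem
                exact hj₂ (Quiv.block_eq_of_mem hha hmem)
              unfold Quiv.toZ
              rw [hv1, hv2]
              push_cast
              ring
          · have hv1 : φ u (Q.ta a) = 0 := by
              apply Quiv.posroot_vanish (by rw [hu]; exact hβ : φ u ∈ _)
              intro hmem
              exact hj₁ (Quiv.block_eq_of_mem hta hmem)
            have hv2 : φ u (Q.ha a) = 0 := by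
              apply Quiv.posroot_vanish (by rw [hu]; exact hβ : φ u ∈ _)
              intro hmem
              exact hj₁ (Quiv.block_eq_of_mem hha hmem)
            unfold Quiv.toZ
            rw [hv1, hv2]
            push_cast
            ring
        rw [← hu, ← hv, heq] at hpos
        omega
    · exfalso
      rw [← hu, h, hv] at hpos
      rw [Quiv.lamA_self] at hpos
      exact lt_irrefl 0 hpos
    · rw [← huv, ← hvv]
      exact h
  -- per-visit roots
  have hvis : ∀ i : ZMod (k+1), ∃ β γ : Fin n → ℕ,
      β ∈ Q.PosRootsOn (P.V (j i)) (P.A (j i)) ∧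
      γ ∈ Q.PosRootsOn (P.V (j i)) (P.A (j i)) ∧ F β ≤ F γ ∧
      β (Q.ta (c (i+1))) ≠ 0 ∧ γ (Q.ha (c i)) ≠ 0 ∧
      (∀ v', β v' ≠ 0 → Relation.ReflTransGen (Quiv.StRel Q) v' (Q.ta (c (i+1)))) ∧
      (∀ v', γ v' ≠ 0 → Relation.ReflTransGen (Quiv.StRel Q) (Q.ha (c i)) v') := by
    intro i
    obtain ⟨hne, hAend, hconn, hAacyc, hposd⟩ := P.dynkin (j i)
    obtain ⟨pd, hz0, hzm⟩ := Quiv.exists_pathData hAend hconn (c 0) (hyV i) (hxV i)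
    obtain ⟨β, γ, hβPR, hγPR, hFle, hβx, hγy, hβreach, hγreach⟩ :=
      pd.visit_core hposd F (hforceA (j i))
    rw [hzm] at hβx hβreach
    rw [hz0] at hγy hγreach
    exact ⟨β, γ, hβPR, hγPR, hFle, hβx, hγy, hβreach, hγreach⟩
  choose β γ hβPR hγPR hFle hβx hγy hβreach hγreach using hvis
  -- forcing across each cut arrow of the cycle
  have hcross : ∀ i : ZMod (k+1), F (γ (i+1)) < F (β i) := by
    intro i
    apply hforceC (j i) (j (i+1)) _ _ (hβPR i) (hγPR (i+1))
    have hzero : ∀ d ∈ Quiv.cutF Q P,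
        Quiv.toZ (γ (i+1)) (Q.ta d) * Quiv.toZ (β i) (Q.ha d) = 0 := by
      intro d _
      by_cases h1 : γ (i+1) (Q.ta d) = 0
      · unfold Quiv.toZ; rw [h1]; push_cast; ring
      · by_cases h2 : β i (Q.ha d) = 0
        · unfold Quiv.toZ; rw [h2]; push_cast; ring
        · exfalso
          have rtg1 := hβreach i (Q.ha d) h2
          have st1 : Quiv.StRel Q (Q.ta (c (i+1))) (Q.ha (c (i+1))) := ⟨c (i+1), rfl, rfl⟩
          have rtg2 := hγreach (i+1) (Q.ta d) h1
          have st2 : Quiv.StRel Q (Q.ta d) (Q.ha d) := ⟨d, rfl, rfl⟩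
          exact Quiv.no_loop hacyc (Q.ha d)
            ((Relation.TransGen.tail' rtg1 st1).trans (Relation.TransGen.tail' rtg2 st2))
    unfold Quiv.lamA
    apply Finset.sum_pos'
    · intro d hd
      rw [hzero d hd, sub_zero]
      exact mul_nonneg (Int.natCast_nonneg _) (Int.natCast_nonneg _)
    · refine ⟨c (i+1), Quiv.mem_cutF.2 (hcut (i+1)), ?_⟩
      rw [hzero (c (i+1)) (Quiv.mem_cutF.2 (hcut (i+1))), sub_zero]
      apply mul_pos
      · exact Int.natCast_pos.2 (Nat.pos_of_ne_zero (hβx i))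
      · exact Int.natCast_pos.2 (Nat.pos_of_ne_zero (hγy (i+1)))
  have hdec : ∀ i : ZMod (k+1), F (γ (i+1)) < F (γ i) :=
    fun i => lt_of_lt_of_le (hcross i) (hFle i)
  -- infinite descent
  set G : ℕ → ℕ := fun s => F (γ ((s : ℕ) : ZMod (k+1))) with hGdef
  have hstep : ∀ s : ℕ, G (s+1) < G s := by
    intro s
    have hcast : (((s+1 : ℕ)) : ZMod (k+1)) = ((s : ℕ) : ZMod (k+1)) + 1 := by
      push_cast; ring
    simp only [hGdef, hcast]
    exact hdec ((s : ℕ) : ZMod (k+1))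
  have hmono : ∀ s : ℕ, G s + s ≤ G 0 := by
    intro s
    induction s with
    | zero => omega
    | succ s ihs =>
      have := hstep s
      omega
  have := hmono (G 0 + 1)
  omega
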